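/- Let V be a valuation domain, E ⊂ K a pseudo-stationary sequence on V, and P ∈ Spec(V). Then E is pseudo-stationary with respect to V_P and Br_{V_P}(E) = Br_V(E)·V_P. -/
import Mathlib


open scoped Pointwise Classical

section Defs

variable {K : Type*} [Field K] {Γ : Type*} [LinearOrderedCommGroupWithZero Γ]
variable {Λ : Type*} [LinearOrder Λ]

/-- `E = {s ν}` is pseudo-convergent: (additively) `v(s_ρ−s_ν) < v(s_σ−s_ρ)` for `ν<ρ<σ`.
In Mathlib's multiplicative convention this reads `v (s σ - s ρ) < v (s ρ - s ν)`. -/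
def IsPseudoConvergent (v : Valuation K Γ) (s : Λ → K) : Prop :=
  ∀ ⦃ν ρ σ : Λ⦄, ν < ρ → ρ < σ → v (s σ - s ρ) < v (s ρ - s ν)

/-- `E = {s ν}` is pseudo-divergent: (additively) `v(s_ρ−s_ν) > v(s_σ−s_ρ)` for `ν<ρ<σ`. -/
def IsPseudoDivergent (v : Valuation K Γ) (s : Λ → K) : Prop :=
  ∀ ⦃ν ρ σ : Λ⦄, ν < ρ → ρ < σ → v (s ρ - s ν) < v (s σ - s ρ)

/-- `E = {s ν}` is pseudo-stationary: the terms are distinct and all pairwise differences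
have the same (nonzero) value. -/
def IsPseudoStationary (v : Valuation K Γ) (s : Λ → K) : Prop :=
  (∀ ⦃ν μ : Λ⦄, ν ≠ μ → s ν ≠ s μ) ∧
    ∀ ⦃ν μ ν' μ' : Λ⦄, ν ≠ μ → ν' ≠ μ' → v (s ν - s μ) = v (s ν' - s μ')

/-- A pseudo-monotone sequence: pseudo-convergent, pseudo-divergent or pseudo-stationary. -/
def IsPseudoMonotone (v : Valuation K Γ) (s : Λ → K) : Prop :=
  IsPseudoConvergent v s ∨ IsPseudoDivergent v s ∨ IsPseudoStationary v s

/-- `α` is a pseudo-limit of the pseudo-convergent sequence `s`: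
`v(α − s_ν) = δ_ν` for all `ν`, where `δ_ν = v(s_ρ − s_ν)` for any `ρ > ν`. -/
def IsPseudoLimitPcv (v : Valuation K Γ) (s : Λ → K) (α : K) : Prop :=
  ∀ ⦃ν ρ : Λ⦄, ν < ρ → v (α - s ν) = v (s ρ - s ν)

/-- `α` is a pseudo-limit of the pseudo-divergent sequence `s`:
`v(α − s_ν) = δ_ν` for all sufficiently large `ν`, where `δ_ν = v(s_ρ − s_ν)` for any `ρ < ν`. -/
def IsPseudoLimitPdv (v : Valuation K Γ) (s : Λ → K) (α : K) : Prop :=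
  ∃ N : Λ, ∀ ⦃ν : Λ⦄, N ≤ ν → ∀ ⦃ρ : Λ⦄, ρ < ν → v (α - s ν) = v (s ρ - s ν)

/-- `α` is a pseudo-limit of the pseudo-stationary sequence `s`:
`v(α − s_ν) = δ` for all sufficiently large `ν`, where `δ` is the breadth. -/
def IsPseudoLimitPst (v : Valuation K Γ) (s : Λ → K) (α : K) : Prop :=
  ∃ N : Λ, ∀ ⦃ν : Λ⦄, N ≤ ν → ∀ ⦃μ μ' : Λ⦄, μ ≠ μ' → v (α - s ν) = v (s μ - s μ')

/-- `α` is a pseudo-limit of a strictly pseudo-monotone sequence `s`. -/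
def IsPseudoLimitSPM (v : Valuation K Γ) (s : Λ → K) (α : K) : Prop :=
  (IsPseudoConvergent v s ∧ IsPseudoLimitPcv v s α) ∨
    (IsPseudoDivergent v s ∧ IsPseudoLimitPdv v s α)

/-- The breadth ideal of a pseudo-convergent sequence:
(additively) `{x : v(x) > δ_ν for all ν}`. -/
def BreadthPcv (v : Valuation K Γ) (s : Λ → K) : Set K :=
  {x : K | ∀ ⦃ν ρ : Λ⦄, ν < ρ → v x < v (s ρ - s ν)}

/-- The breadth ideal of a pseudo-divergent sequence:
(additively) `{x : v(x) > δ_ν for some ν}`. -/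
def BreadthPdv (v : Valuation K Γ) (s : Λ → K) : Set K :=
  {x : K | ∃ ν ρ : Λ, ρ < ν ∧ v x < v (s ρ - s ν)}

/-- The breadth ideal of a pseudo-stationary sequence: (additively) `{x : v(x) ≥ δ}`. -/
def BreadthPst (v : Valuation K Γ) (s : Λ → K) : Set K :=
  {x : K | ∀ ⦃ν μ : Λ⦄, ν ≠ μ → v x ≤ v (s ν - s μ)}

/-- The breadth ideal of a sequence which is definitively either pseudo-convergent or
pseudo-stationary: `{x : v(x) ≤ v(s ρ - s ν)` for all sufficiently large `ν < ρ}`. -/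
def BreadthCvStat (v : Valuation K Γ) (s : Λ → K) : Set K :=
  {x : K | ∃ N : Λ, ∀ ⦃ν ρ : Λ⦄, N ≤ ν → ν < ρ → v x ≤ v (s ρ - s ν)}

/-- The ring `V_E` of rational functions mapping the tail of `E` into the valuation ring,
as a subset of `K(X)`. -/
def VESet (v : Valuation K Γ) (s : Λ → K) : Set (RatFunc K) :=
  {φ : RatFunc K | ∃ N : Λ, ∀ ⦃ν : Λ⦄, N ≤ ν → v (RatFunc.eval (RingHom.id K) (s ν) φ) ≤ 1}

end Defs

section FracIdeals

variable {K : Type*} [Field K]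

/-- `I` is a fractional ideal of the valuation subring `A` of `K`. -/
def IsFractionalSub (A : ValuationSubring K) (I : Submodule A K) : Prop :=
  ∃ a : K, a ∈ A ∧ a ≠ 0 ∧ ∀ x ∈ I, a * x ∈ A

/-- `I` is strictly divisorial: it equals the intersection of all principal fractional
ideals properly containing it. -/
def IsStrictlyDivisorial (A : ValuationSubring K) (I : Submodule A K) : Prop :=
  I = ⨅ c ∈ {c : K | I < Submodule.span A {c}}, Submodule.span A {c}

end FracIdeals

/-- If `x/y ∈ B` and `y ≠ 0`, then `v_B x ≤ v_B y`. -/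
lemma val_le_of_div_mem {K : Type*} [Field K] (B : ValuationSubring K) {x y : K}
    (hy : y ≠ 0) (h : x / y ∈ B) : B.valuation x ≤ B.valuation y := by
  have h1 : B.valuation (x / y) ≤ 1 := (B.valuation_le_one_iff _).2 h
  have := mul_le_mul_left h1 (B.valuation y)
  rwa [one_mul, ← map_mul, div_mul_cancel₀ _ hy] at this

/-- Let `E` be a pseudo-stationary sequence on `V` and `P ∈ Spec(V)`. Then
`E` is pseudo-stationary with respect to the localization `V_P` (realized as `A.ofPrime P`)
and `Br_{V_P}(E) = Br_V(E)·V_P`. -/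
theorem stmt14 {K : Type*} [Field K] (A : ValuationSubring K) (P : Ideal A) [P.IsPrime]
    {Λ : Type*} [LinearOrder Λ] [WellFoundedLT Λ] [Nonempty Λ]
    (hnomax : ∀ ν : Λ, ∃ ρ : Λ, ν < ρ) (s : Λ → K)
    (hE : IsPseudoStationary A.valuation s) :
    IsPseudoStationary (A.ofPrime P).valuation s ∧
    BreadthPst (A.ofPrime P).valuation s =
      ↑(Submodule.span (A.ofPrime P) (BreadthPst A.valuation s)) := by
  set B := A.ofPrime P with hB
  have hAB : A ≤ B := A.le_ofPrime P
  have hne : ∀ ⦃ν μ : Λ⦄, ν ≠ μ → s ν - s μ ≠ 0 := fun _ _ h => sub_ne_zero.mpr (hE.1 h)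
  have hdiv : ∀ ⦃ν μ ν' μ' : Λ⦄, ν ≠ μ → ν' ≠ μ' →
      (s ν - s μ) / (s ν' - s μ') ∈ A := by
    intro ν μ ν' μ' h h'
    refine (A.valuation_le_one_iff _).1 ?_
    rw [map_div₀, hE.2 h h']
    exact div_self_le_one _
  have hval : ∀ ⦃ν μ ν' μ' : Λ⦄, ν ≠ μ → ν' ≠ μ' →
      B.valuation (s ν - s μ) = B.valuation (s ν' - s μ') := fun ν μ ν' μ' h h' =>
    le_antisymm (val_le_of_div_mem B (hne h') (hAB (hdiv h h')))
      (val_le_of_div_mem B (hne h) (hAB (hdiv h' h)))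
  refine ⟨⟨hE.1, hval⟩, ?_⟩
  obtain ⟨ν₀⟩ := ‹Nonempty Λ›
  obtain ⟨ρ₀, hρ₀⟩ := hnomax ν₀
  have hd : ν₀ ≠ ρ₀ := ne_of_lt hρ₀
  set c : K := s ν₀ - s ρ₀ with hc
  have hc0 : c ≠ 0 := hne hd
  have hcBr : c ∈ BreadthPst A.valuation s := fun ν μ h => (hE.2 hd h).le
  have hsub : BreadthPst A.valuation s ⊆ BreadthPst B.valuation s := by
    intro x hx ν μ h
    refine val_le_of_div_mem B (hne h) (hAB ((A.valuation_le_one_iff _).1 ?_))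
    rw [map_div₀]
    exact div_le_one_of_le₀ (hx h) zero_le'
  let M : Submodule B K :=
    { carrier := BreadthPst B.valuation s
      add_mem' := fun {a b} ha hb ν μ h =>
        le_trans (B.valuation.map_add a b) (max_le (ha h) (hb h))
      zero_mem' := fun ν μ h => by simp
      smul_mem' := fun r x hx ν μ h => by
        have hr : B.valuation (r : K) ≤ 1 := (B.valuation_le_one_iff _).2 r.2
        have : B.valuation ((r : K) * x) ≤ B.valuation x := by
          rw [map_mul]
          calc B.valuation (r : K) * B.valuation x ≤ 1 * B.valuation x :=
                mul_le_mul_left hr _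
            _ = B.valuation x := one_mul _
        exact le_trans this (hx h) }
  have hMle : Submodule.span B (BreadthPst A.valuation s) ≤ M :=
    Submodule.span_le.2 hsub
  ext x
  constructor
  · intro hx
    have hxc : x / c ∈ B := by
      refine (B.valuation_le_one_iff _).1 ?_
      rw [map_div₀]
      exact div_le_one_of_le₀ (hx hd) zero_le'
    have hmem : (⟨x / c, hxc⟩ : B) • c ∈
        Submodule.span B (BreadthPst A.valuation s) :=
      Submodule.smul_mem _ _ (Submodule.subset_span hcBr)
    have heq : (⟨x / c, hxc⟩ : B) • c = x := by
      show (x / c) * c = x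
      exact div_mul_cancel₀ x hc0
    rwa [heq] at hmem
  · exact fun hx => hMle hx
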